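/- Let p₁ be the increasing string (L+1)(L+2)⋯(2L), p₂ the increasing string (2L+1)⋯(4L), p₃ = 12⋯L, and let p₁^R, p₂^R denote the reverses of p₁ and p₂. Then for all permutations x, y ∈ S_L: (a) d_U(p₂^R ∘ p₁ ∘ x, p₂^R ∘ p₁ ∘ y) ≤ L − 1; (b) d_U(p₂^R ∘ p₁ ∘ x, p₂^R ∘ p₁^R ∘ p₃) ≤ 2L − 2; (c) d_U(p₂ ∘ p₁ ∘ y, p₂^R ∘ p₁^R ∘ p₃) ≥ 3L − 2; (d) d_U(p₂^R ∘ p₁ ∘ x, p₂ ∘ p₁ ∘ y) = 2L − 1 + d_U(x, y). -/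

import Mathlib

/-- Length of a longest common subsequence of two strings (lists over ℕ). -/
noncomputable def LCS (x y : List ℕ) : ℕ :=
  sSup {k | ∃ s : List ℕ, s.Sublist x ∧ s.Sublist y ∧ s.length = k}

/-- Ulam distance between permutations, via `d_U(σ,τ) = |σ| − LCS(σ,τ)`. -/
noncomputable def ulamDist (x y : List ℕ) : ℕ := x.length - LCS x y

/-- `π` is a permutation of `[n] = {1,…,n}` viewed as a string. -/
def IsPermOf (n : ℕ) (π : List ℕ) : Prop := π.Perm (List.range' 1 n)

lemma lcs_bdd (x y : List ℕ) :
    BddAbove {k | ∃ s : List ℕ, s.Sublist x ∧ s.Sublist y ∧ s.length = k} :=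
  ⟨x.length, fun _ ⟨_, hx, _, hl⟩ => hl ▸ hx.length_le⟩

lemma le_LCS {x y s : List ℕ} (h1 : s.Sublist x) (h2 : s.Sublist y) :
    s.length ≤ LCS x y :=
  le_csSup (lcs_bdd x y) ⟨s, h1, h2, rfl⟩

lemma LCS_le {x y : List ℕ} {k : ℕ}
    (h : ∀ s : List ℕ, s.Sublist x → s.Sublist y → s.length ≤ k) : LCS x y ≤ k :=
  csSup_le ⟨0, [], List.nil_sublist _, List.nil_sublist _, rfl⟩
    (fun _ ⟨s, h1, h2, hl⟩ => hl ▸ h s h1 h2)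

lemma exists_LCS (x y : List ℕ) :
    ∃ s : List ℕ, s.Sublist x ∧ s.Sublist y ∧ s.length = LCS x y := by
  have h := Nat.sSup_mem (s := {k | ∃ s : List ℕ, s.Sublist x ∧ s.Sublist y ∧ s.length = k})
    ⟨0, [], List.nil_sublist _, List.nil_sublist _, rfl⟩ (lcs_bdd x y)
  exact h

lemma LCS_le_length_left (x y : List ℕ) : LCS x y ≤ x.length :=
  LCS_le fun _ h1 _ => h1.length_le

/-- a common subsequence of an increasing and a decreasing list has length ≤ 1 -/
lemma LCS_le_one {x y : List ℕ} (hx : x.Pairwise (· < ·)) (hy : y.Pairwise (· > ·)) :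
    LCS x y ≤ 1 := by
  apply LCS_le
  intro s h1 h2
  have hs1 := List.Pairwise.sublist h1 hx
  have hs2 := List.Pairwise.sublist h2 hy
  match s, hs1, hs2 with
  | [], _, _ => simp
  | [_], _, _ => simp
  | a :: b :: t, hs1, hs2 =>
    simp [List.pairwise_cons] at hs1 hs2
    omega

lemma length_filter3 (p q : ℕ → Bool) (s : List ℕ) :
    (s.filter p).length + (s.filter (fun n => !p n && q n)).length
      + (s.filter (fun n => !p n && !q n)).length = s.length := by
  induction s with
  | nil => simp
  | cons h t ih =>
    by_cases hp : p h <;> by_cases hq : q h <;>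
      simp [List.filter_cons, hp, hq] <;> omega

/-- Splitting LCS by a three-block value partition. -/
lemma LCS_append3_le (a b c a' b' c' : List ℕ) (p q : ℕ → Bool)
    (hpa : ∀ n ∈ a, p n = true) (hpa' : ∀ n ∈ a', p n = true)
    (hb : ∀ n ∈ b, p n = false ∧ q n = true) (hb' : ∀ n ∈ b', p n = false ∧ q n = true)
    (hc : ∀ n ∈ c, p n = false ∧ q n = false) (hc' : ∀ n ∈ c', p n = false ∧ q n = false) :
    LCS (a ++ b ++ c) (a' ++ b' ++ c') ≤ LCS a a' + LCS b b' + LCS c c' := by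
  apply LCS_le
  intro s h1 h2
  set r : ℕ → Bool := fun n => !p n && q n with hr
  set t : ℕ → Bool := fun n => !p n && !q n with ht
  have key : ∀ (u v w : List ℕ), (∀ n ∈ u, p n = true) → (∀ n ∈ v, p n = false ∧ q n = true) →
      (∀ n ∈ w, p n = false ∧ q n = false) →
      (u ++ v ++ w).filter p = u ∧ (u ++ v ++ w).filter r = v ∧ (u ++ v ++ w).filter t = w := by
    intro u v w hu hv hw
    refine ⟨?_, ?_, ?_⟩ <;> rw [List.filter_append, List.filter_append]
    · rw [List.filter_eq_self.mpr hu,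
        List.filter_eq_nil_iff.mpr (fun n hn => by simp [(hv n hn).1]),
        List.filter_eq_nil_iff.mpr (fun n hn => by simp [(hw n hn).1])]
      simp
    · rw [List.filter_eq_nil_iff.mpr (fun n hn => by simp [hr, hu n hn]),
        List.filter_eq_self.mpr (fun n hn => by simp [hr, (hv n hn).1, (hv n hn).2]),
        List.filter_eq_nil_iff.mpr (fun n hn => by simp [hr, (hw n hn).1, (hw n hn).2])]
      simp
    · rw [List.filter_eq_nil_iff.mpr (fun n hn => by simp [ht, hu n hn]),
        List.filter_eq_nil_iff.mpr (fun n hn => by simp [ht, (hv n hn).1, (hv n hn).2]),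
        List.filter_eq_self.mpr (fun n hn => by simp [ht, (hw n hn).1, (hw n hn).2])]
      simp
  obtain ⟨e1, e2, e3⟩ := key a b c hpa hb hc
  obtain ⟨f1, f2, f3⟩ := key a' b' c' hpa' hb' hc'
  have l1 : (s.filter p).length ≤ LCS a a' :=
    le_LCS (e1 ▸ h1.filter p) (f1 ▸ h2.filter p)
  have l2 : (s.filter r).length ≤ LCS b b' :=
    le_LCS (e2 ▸ h1.filter r) (f2 ▸ h2.filter r)
  have l3 : (s.filter t).length ≤ LCS c c' :=
    le_LCS (e3 ▸ h1.filter t) (f3 ▸ h2.filter t)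
  have hlen := length_filter3 p q s
  rw [← hr, ← ht] at hlen
  omega

theorem center_padding_observations (L : ℕ)
    (p1 p2 p3 : List ℕ)
    (hp1 : p1 = List.range' (L + 1) L) (hp2 : p2 = List.range' (2 * L + 1) (2 * L))
    (hp3 : p3 = List.range' 1 L)
    (x y : List ℕ) (hx : IsPermOf L x) (hy : IsPermOf L y) :
    ulamDist (p2.reverse ++ p1 ++ x) (p2.reverse ++ p1 ++ y) ≤ L - 1 ∧
    ulamDist (p2.reverse ++ p1 ++ x) (p2.reverse ++ p1.reverse ++ p3) ≤ 2 * L - 2 ∧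
    ulamDist (p2 ++ p1 ++ y) (p2.reverse ++ p1.reverse ++ p3) ≥ 3 * L - 2 ∧
    ulamDist (p2.reverse ++ p1 ++ x) (p2 ++ p1 ++ y) = 2 * L - 1 + ulamDist x y := by
  rcases Nat.eq_zero_or_pos L with hL | hL
  · subst hL
    simp [List.range'] at hp1 hp2 hp3
    have hxe : x = [] := List.eq_nil_of_length_eq_zero (by simpa using hx.length_eq)
    have hye : y = [] := List.eq_nil_of_length_eq_zero (by simpa using hy.length_eq)
    subst hp1 hp2 hp3 hxe hye
    simp [ulamDist]
  -- lengths and memberships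
  have hxl : x.length = L := by simpa using hx.length_eq
  have hyl : y.length = L := by simpa using hy.length_eq
  have h1x : (1 : ℕ) ∈ x := hx.mem_iff.mpr (List.mem_range'_1.mpr ⟨le_refl _, by omega⟩)
  have h1y : (1 : ℕ) ∈ y := hy.mem_iff.mpr (List.mem_range'_1.mpr ⟨le_refl _, by omega⟩)
  have hp1l : p1.length = L := by simp [hp1]
  have hp2l : p2.length = 2 * L := by simp [hp2]
  have hp3l : p3.length = L := by simp [hp3]
  have h2Lp1 : 2 * L ∈ p1 := by
    rw [hp1, List.mem_range'_1]; omega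
  have h2L1p2 : 2 * L + 1 ∈ p2 := by
    rw [hp2, List.mem_range'_1]; omega
  have h1p3 : (1 : ℕ) ∈ p3 := by
    rw [hp3, List.mem_range'_1]; omega
  -- value-range facts
  have hvp1 : ∀ n ∈ p1, L + 1 ≤ n ∧ n ≤ 2 * L := by
    intro n hn; rw [hp1, List.mem_range'_1] at hn; omega
  have hvp2 : ∀ n ∈ p2, 2 * L + 1 ≤ n := by
    intro n hn; rw [hp2, List.mem_range'_1] at hn; omega
  have hvp3 : ∀ n ∈ p3, n ≤ L := by
    intro n hn; rw [hp3, List.mem_range'_1] at hn; omega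
  have hvx : ∀ n ∈ x, n ≤ L := by
    intro n hn; have := hx.mem_iff.mp hn; rw [List.mem_range'_1] at this; omega
  have hvy : ∀ n ∈ y, n ≤ L := by
    intro n hn; have := hy.mem_iff.mp hn; rw [List.mem_range'_1] at this; omega
  -- sortedness
  have hp1inc : p1.Pairwise (· < ·) := hp1 ▸ List.pairwise_lt_range' _ Nat.one_pos
  have hp2inc : p2.Pairwise (· < ·) := hp2 ▸ List.pairwise_lt_range' _ Nat.one_pos
  have hp1dec : p1.reverse.Pairwise (· > ·) := List.pairwise_reverse.mpr hp1inc
  have hp2dec : p2.reverse.Pairwise (· > ·) := List.pairwise_reverse.mpr hp2inc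
  -- the two predicates
  set p : ℕ → Bool := fun n => decide (2 * L + 1 ≤ n) with hp
  set q : ℕ → Bool := fun n => decide (L + 1 ≤ n) with hq
  refine ⟨?_, ?_, ?_, ?_⟩
  · -- (a)
    have hs1 : ((p2.reverse ++ p1) ++ [1]).Sublist (p2.reverse ++ p1 ++ x) :=
      (List.Sublist.refl _).append (List.singleton_sublist.mpr h1x)
    have hs2 : ((p2.reverse ++ p1) ++ [1]).Sublist (p2.reverse ++ p1 ++ y) :=
      (List.Sublist.refl _).append (List.singleton_sublist.mpr h1y)
    have hlcs := le_LCS hs1 hs2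
    simp only [List.length_append, List.length_reverse, List.length_cons, List.length_nil,
      hp1l, hp2l] at hlcs
    simp only [ulamDist, List.length_append, List.length_reverse, hp1l, hp2l, hxl]
    omega
  · -- (b)
    have hs1 : ((p2.reverse ++ [2 * L]) ++ [1]).Sublist (p2.reverse ++ p1 ++ x) :=
      ((List.Sublist.refl _).append (List.singleton_sublist.mpr h2Lp1)).append
        (List.singleton_sublist.mpr h1x)
    have hs2 : ((p2.reverse ++ [2 * L]) ++ [1]).Sublist (p2.reverse ++ p1.reverse ++ p3) :=
      ((List.Sublist.refl _).append
        (List.singleton_sublist.mpr (List.mem_reverse.mpr h2Lp1))).append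
        (List.singleton_sublist.mpr h1p3)
    have hlcs := le_LCS hs1 hs2
    simp only [List.length_append, List.length_reverse, List.length_cons, List.length_nil,
      hp2l] at hlcs
    simp only [ulamDist, List.length_append, List.length_reverse, hp1l, hp2l, hxl]
    omega
  · -- (c)
    have hsplit := LCS_append3_le p2 p1 y p2.reverse p1.reverse p3 p q
      (fun n hn => by have := hvp2 n hn; simp [hp]; omega)
      (fun n hn => by have := hvp2 n (List.mem_reverse.mp hn); simp [hp]; omega)
      (fun n hn => by
        have := hvp1 n hn
        constructor <;> simp [hp, hq] <;> omega)
      (fun n hn => by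
        have := hvp1 n (List.mem_reverse.mp hn)
        constructor <;> simp [hp, hq] <;> omega)
      (fun n hn => by
        have := hvy n hn
        constructor <;> simp [hp, hq] <;> omega)
      (fun n hn => by
        have := hvp3 n hn
        constructor <;> simp [hp, hq] <;> omega)
    have b1 : LCS p2 p2.reverse ≤ 1 := LCS_le_one hp2inc hp2dec
    have b2 : LCS p1 p1.reverse ≤ 1 := LCS_le_one hp1inc hp1dec
    have b3 : LCS y p3 ≤ L := by
      have := LCS_le_length_left y p3; omega
    
    simp only [ulamDist, List.length_append, List.length_reverse, hp1l, hp2l, hyl]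
    omega
  · -- (d)
    have hsplit := LCS_append3_le p2.reverse p1 x p2 p1 y p q
      (fun n hn => by have := hvp2 n (List.mem_reverse.mp hn); simp [hp]; omega)
      (fun n hn => by have := hvp2 n hn; simp [hp]; omega)
      (fun n hn => by
        have := hvp1 n hn
        constructor <;> simp [hp, hq] <;> omega)
      (fun n hn => by
        have := hvp1 n hn
        constructor <;> simp [hp, hq] <;> omega)
      (fun n hn => by
        have := hvx n hn
        constructor <;> simp [hp, hq] <;> omega)
      (fun n hn => by
        have := hvy n hn
        constructor <;> simp [hp, hq] <;> omega)
    have b1 : LCS p2.reverse p2 ≤ 1 := by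
      apply LCS_le
      intro s h1 h2
      have hs1 := List.Pairwise.sublist h1 hp2dec
      have hs2 := List.Pairwise.sublist h2 hp2inc
      match s, hs1, hs2 with
      | [], _, _ => simp
      | [_], _, _ => simp
      | a :: b :: t, hs1, hs2 =>
        simp [List.pairwise_cons] at hs1 hs2
        omega
    have b2 : LCS p1 p1 ≤ L := by
      have := LCS_le_length_left p1 p1; omega
    -- lower bound
    obtain ⟨w, hw1, hw2, hwl⟩ := exists_LCS x y
    have hs1 : (([2 * L + 1] ++ p1) ++ w).Sublist (p2.reverse ++ p1 ++ x) :=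
      ((List.singleton_sublist.mpr (List.mem_reverse.mpr h2L1p2)).append
        (List.Sublist.refl _)).append hw1
    have hs2 : (([2 * L + 1] ++ p1) ++ w).Sublist (p2 ++ p1 ++ y) :=
      ((List.singleton_sublist.mpr h2L1p2).append (List.Sublist.refl _)).append hw2
    have hlow := le_LCS hs1 hs2
    simp only [List.length_append, List.length_cons, List.length_nil, hp1l, hwl] at hlow
    have hxyL : LCS x y ≤ L := by
      have := LCS_le_length_left x y; omega
    simp only [ulamDist, List.length_append, List.length_reverse, hp1l, hp2l, hxl]
    omega
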